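/- Let l_1, …, l_T and δ be nonnegative real numbers. Then Σ_{t=1}^T l_t / √(δ + Σ_{i=1}^t l_i) ≤ 2 (√(δ + Σ_{t=1}^T l_t) − √δ), with the convention 0/√0 = 0. -/

import Mathlib

lemma step_aux {a b : ℝ} (hb : 0 ≤ b) (hba : b ≤ a) :
    (a - b) / Real.sqrt a ≤ 2 * (Real.sqrt a - Real.sqrt b) := by
  rcases eq_or_lt_of_le (hb.trans hba) with h | h
  · have ha : a = 0 := h.symm
    have hbz : b = 0 := le_antisymm (ha ▸ hba) hb
    subst ha; subst hbz; simp
  · have hsa : 0 < Real.sqrt a := Real.sqrt_pos.mpr h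
    rw [div_le_iff₀ hsa]
    have key : a - b = (Real.sqrt a - Real.sqrt b) * (Real.sqrt a + Real.sqrt b) := by
      have := Real.sq_sqrt (le_of_lt h)
      have := Real.sq_sqrt hb
      ring_nf
      nlinarith [Real.sq_sqrt (le_of_lt h), Real.sq_sqrt hb]
    rw [key]
    have h1 : Real.sqrt b ≤ Real.sqrt a := Real.sqrt_le_sqrt hba
    nlinarith [Real.sqrt_nonneg b]

/-- Lemma 3.5 of Auer et al. (2002): for nonnegative reals `l 1, …, l T` and `δ ≥ 0`,
`Σ_{t=1}^T l t / √(δ + Σ_{i=1}^t l i) ≤ 2 (√(δ + Σ_{t=1}^T l t) − √δ)`,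
with the convention `0/√0 = 0` (which is Lean's convention for division by zero). -/
theorem stmt_8 (T : ℕ) (l : ℕ → ℝ) (hl : ∀ t, 0 ≤ l t) (δ : ℝ) (hδ : 0 ≤ δ) :
    ∑ t ∈ Finset.Icc 1 T, l t / Real.sqrt (δ + ∑ i ∈ Finset.Icc 1 t, l i)
      ≤ 2 * (Real.sqrt (δ + ∑ t ∈ Finset.Icc 1 T, l t) - Real.sqrt δ) := by
  induction T with
  | zero => simp
  | succ T ih =>
    rw [Finset.sum_Icc_succ_top (by omega : 1 ≤ T + 1),
        Finset.sum_Icc_succ_top (by omega : 1 ≤ T + 1)]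
    have hS : 0 ≤ ∑ i ∈ Finset.Icc 1 T, l i :=
      Finset.sum_nonneg fun i _ => hl i
    have hb : 0 ≤ δ + ∑ i ∈ Finset.Icc 1 T, l i := by positivity
    have hba : δ + ∑ i ∈ Finset.Icc 1 T, l i
        ≤ δ + ((∑ i ∈ Finset.Icc 1 T, l i) + l (T + 1)) := by
      linarith [hl (T + 1)]
    have key := step_aux hb hba
    have heq : (δ + ((∑ i ∈ Finset.Icc 1 T, l i) + l (T+1)))
        - (δ + ∑ i ∈ Finset.Icc 1 T, l i) = l (T+1) := by ring
    rw [heq] at key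
    calc _ ≤ 2 * (Real.sqrt (δ + ∑ i ∈ Finset.Icc 1 T, l i) - Real.sqrt δ)
          + l (T+1) / Real.sqrt (δ + ((∑ i ∈ Finset.Icc 1 T, l i) + l (T+1))) := by
            exact add_le_add_left ih _
      _ ≤ _ := by linarith [key]
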